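/- A topological space X is radial at a point x if and only if x admits a spoke system, i.e., a nonempty family (S_i)_{i∈I} of subspaces each containing the neighbourhood core N_x and well-based at x, such that the sets ⋃_{i∈I} U_i, with each U_i a neighbourhood of x in S_i, form a neighbourhood base at x in X. -/

import Mathlib

open Filter Topology Set

universe u v

/-- `X` is radial at `x`: every set with `x` in its closure contains a transfinite
sequence (an ordinal-indexed net, with nonempty domain) converging to `x`. -/
def RadialAt {X : Type u} [TopologicalSpace X] (x : X) : Prop :=
  ∀ A : Set X, x ∈ closure A →
    ∃ o : Ordinal.{u}, o ≠ 0 ∧ ∃ f : o.ToType → X,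
      (∀ a, f a ∈ A) ∧ Filter.Tendsto f Filter.atTop (nhds x)

/-- The neighbourhood core of `x`: the intersection of all neighbourhoods of `x`. -/
def NbhdCore {X : Type u} [TopologicalSpace X] (x : X) : Set X :=
  ⋂₀ {U | U ∈ nhds x}

/-- A set `U ⊆ S` is a neighbourhood of `x` in the subspace `S` iff `U ∈ 𝓝[S] x`.
`S` is well-based at `x` if `x` has a neighbourhood base in the subspace `S`
well-ordered by reverse inclusion. -/
def WellBasedWithin {X : Type u} [TopologicalSpace X] (x : X) (S : Set X) : Prop :=
  ∃ B : Set (Set X),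
    (∀ b ∈ B, b ⊆ S ∧ b ∈ nhdsWithin x S) ∧
    (∀ U, U ⊆ S → U ∈ nhdsWithin x S → ∃ b ∈ B, b ⊆ U) ∧
    IsChain (· ⊆ ·) B ∧ B.WellFoundedOn (fun a b => b ⊂ a)

/-- A spoke system for `x`: a nonempty family of subspaces, each containing the
neighbourhood core and well-based at `x`, such that the unions of subspace
neighbourhoods of `x` form a neighbourhood base at `x`. -/
def IsSpokeSystem {X : Type u} [TopologicalSpace X] {I : Type v} (x : X)
    (S : I → Set X) : Prop :=
  Nonempty I ∧
  (∀ i, NbhdCore x ⊆ S i) ∧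
  (∀ i, x ∈ S i) ∧
  (∀ i, WellBasedWithin x (S i)) ∧
  (∀ U : I → Set X, (∀ i, U i ⊆ S i ∧ U i ∈ nhdsWithin x (S i)) →
    (⋃ i, U i) ∈ nhds x) ∧
  (∀ V ∈ nhds x, ∃ U : I → Set X,
    (∀ i, U i ⊆ S i ∧ U i ∈ nhdsWithin x (S i)) ∧ (⋃ i, U i) ⊆ V)

/-- An independent spoke system: distinct spokes meet exactly in the
neighbourhood core. -/
def IsIndepSpokeSystem {X : Type u} [TopologicalSpace X] {I : Type v} (x : X)
    (S : I → Set X) : Prop :=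
  IsSpokeSystem x S ∧ ∀ i j : I, i ≠ j → S i ∩ S j = NbhdCore x

/-- `X` is strongly Fréchet at `x`. -/
def StronglyFrechetAt {X : Type u} [TopologicalSpace X] (x : X) : Prop :=
  ∀ A : ℕ → Set X, Antitone A → (∀ n, x ∈ closure (A n)) →
    ∃ u : ℕ → X, (∀ n, u n ∈ A n) ∧ Filter.Tendsto u Filter.atTop (nhds x)

/-- `X` is first-countable at `x`: `x` has a countable neighbourhood base. -/
def FirstCountableAt {X : Type u} [TopologicalSpace X] (x : X) : Prop :=
  ∃ B : Set (Set X), B.Countable ∧ (∀ b ∈ B, b ∈ nhds x) ∧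
    ∀ U ∈ nhds x, ∃ b ∈ B, b ⊆ U

section SpokeAux

open Cardinal

variable {X : Type u} [TopologicalSpace X] {x : X}

lemma mem_nbhdCore : x ∈ NbhdCore x :=
  mem_sInter.2 fun _ hU => mem_of_mem_nhds hU

lemma nbhdCore_subset {V : Set X} (hV : V ∈ nhds x) : NbhdCore x ⊆ V :=
  fun _ hy => hy V hV

lemma nbhdCore_subset_of_mem_nhdsWithin {U : Set X} (hU : U ∈ nhdsWithin x (NbhdCore x)) :
    NbhdCore x ⊆ U := by
  obtain ⟨u, hopen, hxu, husub⟩ := mem_nhdsWithin.1 hU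
  intro y hy
  exact husub ⟨nbhdCore_subset (hopen.mem_nhds hxu) hy, hy⟩

lemma wellBasedWithin_nbhdCore : WellBasedWithin x (NbhdCore x) := by
  refine ⟨{NbhdCore x}, ?_, ?_, ?_, ?_⟩
  · rintro b rfl
    exact ⟨subset_rfl, self_mem_nhdsWithin⟩
  · intro U _ hU
    exact ⟨NbhdCore x, rfl, nbhdCore_subset_of_mem_nhdsWithin hU⟩
  · exact Set.pairwise_singleton _ _
  · constructor
    rintro ⟨b, hb⟩
    constructor
    rintro ⟨c, hc⟩ h
    rw [Set.mem_singleton_iff] at hb hc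
    subst hb; subst hc
    exact absurd h (ssubset_irrefl _)

lemma minReg (rad : RadialAt x) (P : Set X) (hP : x ∈ closure P) :
    ∃ μ : Ordinal.{u}, μ ≠ 0 ∧ μ.cof.ord = μ ∧
      (∃ f : μ.ToType → X, (∀ a, f a ∈ P) ∧ Tendsto f atTop (nhds x)) ∧
      (∀ o : Ordinal.{u}, o ≠ 0 →
        (∃ g : o.ToType → X, (∀ a, g a ∈ P) ∧ Tendsto g atTop (nhds x)) → μ ≤ o) := by
  set T : Set Ordinal.{u} :=
    {o | o ≠ 0 ∧ ∃ f : o.ToType → X, (∀ a, f a ∈ P) ∧ Tendsto f atTop (nhds x)} with hT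
  have hTne : T.Nonempty := by
    obtain ⟨o, ho, f, hf⟩ := rad P hP
    exact ⟨o, ho, f, hf⟩
  set μ := sInf T with hμdef
  obtain ⟨hμ0, f, hf1, hf2⟩ : μ ∈ T := csInf_mem hTne
  have hmin : ∀ o : Ordinal.{u}, o ≠ 0 →
      (∃ g : o.ToType → X, (∀ a, g a ∈ P) ∧ Tendsto g atTop (nhds x)) → μ ≤ o :=
    fun o ho hg => csInf_le' ⟨ho, hg⟩
  haveI : Nonempty μ.ToType := Ordinal.nonempty_toType_iff.2 hμ0
  haveI : IsWellOrder μ.ToType (· < ·) := isWellOrder_lt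
  obtain ⟨S, hSu, hSt⟩ := Ordinal.exists_ord_cof_eq μ.ToType
  rw [Ordinal.cof_toType] at hSt
  set κ := μ.cof.ord with hκdef
  have hκ0 : κ ≠ 0 := by
    rw [← hSt]
    rw [Ordinal.type_ne_zero_iff_nonempty]
    obtain ⟨s, hs, -⟩ := hSu (Classical.arbitrary _)
    exact ⟨⟨s, hs⟩⟩
  haveI : Nonempty κ.ToType := Ordinal.nonempty_toType_iff.2 hκ0
  haveI : IsWellOrder κ.ToType (· < ·) := isWellOrder_lt
  have htt : Ordinal.type ((· < ·) : κ.ToType → κ.ToType → Prop) =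
      Ordinal.type ((· < ·) : S → S → Prop) :=
    (Ordinal.type_toType κ).trans hSt.symm
  obtain ⟨e⟩ := Ordinal.type_eq.mp htt
  set c : κ.ToType → μ.ToType := fun γ => (e γ : μ.ToType) with hc
  have hcmono : Monotone c := by
    intro a b hab
    rcases eq_or_lt_of_le hab with h | h
    · rw [h]
    · exact le_of_lt (e.map_rel_iff.2 h)
  have hctend : Tendsto c atTop atTop := by
    rw [Filter.tendsto_atTop]
    intro b
    obtain ⟨s, hs, hsb⟩ := hSu b
    rw [Filter.eventually_atTop]
    refine ⟨e.symm ⟨s, hs⟩, fun γ hγ => ?_⟩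
    have heq : c (e.symm ⟨s, hs⟩) = s := by simp [hc]
    exact le_trans hsb (heq ▸ hcmono hγ)
  have hμκ : μ ≤ κ := hmin κ hκ0 ⟨f ∘ c, fun a => hf1 _, hf2.comp hctend⟩
  have hEq : κ = μ := le_antisymm (Ordinal.ord_cof_le μ) hμκ
  exact ⟨μ, hμ0, hEq, ⟨f, hf1, hf2⟩, hmin⟩

lemma avoid (rad : RadialAt x) {A : Set X}
    (hAN : ∀ y ∈ A, y ∉ NbhdCore x) {μ : Ordinal.{u}}
    (hmin : ∀ o : Ordinal.{u}, o ≠ 0 →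
      (∃ g : o.ToType → X, (∀ a, g a ∈ A) ∧ Tendsto g atTop (nhds x)) → μ ≤ o)
    (Q : Set X) (hQA : Q ⊆ A) (hQc : ∃ o : Ordinal.{u}, o < μ ∧ #Q ≤ o.card) :
    ∃ V ∈ nhds x, ∀ y ∈ Q, y ∉ V := by
  by_contra hcon
  push_neg at hcon
  have hxQ : x ∈ closure Q := by
    rw [mem_closure_iff_nhds]
    intro t ht
    obtain ⟨y, hy, hyt⟩ := hcon t ht
    exact ⟨y, hyt, hy⟩
  obtain ⟨κ, hκ0, hκreg, ⟨g, hg1, hg2⟩, -⟩ := minReg rad Q hxQ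
  have hμκ : μ ≤ κ := hmin κ hκ0 ⟨g, fun a => hQA (hg1 a), hg2⟩
  haveI : Nonempty κ.ToType := Ordinal.nonempty_toType_iff.2 hκ0
  haveI : IsWellOrder κ.ToType (· < ·) := isWellOrder_lt
  have fib : ∀ y ∈ Q, ∃ b : κ.ToType, ∀ δ, g δ = y → δ < b := by
    intro y hy
    by_contra hb
    push_neg at hb
    have hyN : y ∈ NbhdCore x := by
      refine mem_sInter.2 fun V hV => ?_
      obtain ⟨b₀, hb₀⟩ := mem_atTop_sets.1 (mem_map.1 (hg2 hV))
      obtain ⟨δ, hδy, hδb⟩ := hb b₀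
      rw [← hδy]
      exact hb₀ δ hδb
    exact hAN y (hQA hy) hyN
  choose! bnd hbnd using fib
  have hcard : #(bnd '' Q) < κ.cof := by
    obtain ⟨o, ho, hoc⟩ := hQc
    calc #(bnd '' Q) ≤ #Q := Cardinal.mk_image_le
      _ ≤ o.card := hoc
      _ < κ.cof := Cardinal.lt_ord.1 (ho.trans_le (hμκ.trans_eq hκreg.symm))
  have hbd : Bounded (· < ·) (bnd '' Q) := by
    by_contra hnb
    refine absurd (Order.cof_le (s := bnd '' Q) fun a => ?_) (not_le.2 (by rwa [Ordinal.cof_toType]))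
    by_contra hna
    exact hnb ⟨a, fun b hb => not_le.1 fun h => hna ⟨b, hb, h⟩⟩
  obtain ⟨b', hb'⟩ := hbd
  have h1 : b' < bnd (g b') := hbnd (g b') (hg1 b') b' rfl
  have h2 : bnd (g b') < b' := hb' _ (mem_image_of_mem _ (hg1 b'))
  exact absurd (h1.trans h2) (lt_irrefl _)

lemma spoke_of_closure (rad : RadialAt x) {A : Set X} (hA : x ∈ closure A)
    (hAN : ∀ y ∈ A, y ∉ NbhdCore x) :
    ∃ S : Set X, NbhdCore x ⊆ S ∧ x ∈ S ∧ WellBasedWithin x S ∧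
      ∀ U, U ⊆ S → U ∈ nhdsWithin x S → (U ∩ A).Nonempty := by
  obtain ⟨μ, hμ0, hμreg, ⟨f, hf1, hf2⟩, hmin⟩ := minReg rad A hA
  haveI : Nonempty μ.ToType := Ordinal.nonempty_toType_iff.2 hμ0
  haveI : IsWellOrder μ.ToType (· < ·) := isWellOrder_lt
  have step : ∀ γ : μ.ToType, ∀ h : ∀ δ, δ < γ → μ.ToType,
      ∃ p : μ.ToType × Set X, p.2 ∈ nhds x ∧ (∀ δ (hδ : δ < γ), f (h δ hδ) ∉ p.2) ∧
        f p.1 ∈ p.2 ∧ ∀ δ (hδ : δ < γ), h δ hδ < p.1 := by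
    intro γ h
    set Hs : Set μ.ToType := Set.range (fun d : {δ : μ.ToType // δ < γ} => h d.1 d.2) with hHs
    have hHcard : #Hs ≤ (Ordinal.typein (α := μ.ToType) (· < ·) γ).card := by
      refine le_trans Cardinal.mk_range_le ?_
      rw [← Ordinal.card_typein]
    have hcard2 : (Ordinal.typein (α := μ.ToType) (· < ·) γ).card < μ.cof :=
      Cardinal.lt_ord.1 ((Ordinal.typein_lt_self γ).trans_eq hμreg.symm)
    obtain ⟨V, hV, hVQ⟩ := avoid rad hAN hmin (f '' Hs)
      (by rintro y ⟨a, ha, rfl⟩; exact hf1 a)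
      ⟨Ordinal.typein (α := μ.ToType) (· < ·) γ, Ordinal.typein_lt_self γ,
        le_trans Cardinal.mk_image_le hHcard⟩
    have hHb : Bounded (· < ·) Hs := by
      by_contra hnb
      refine absurd (Order.cof_le (s := Hs) fun a => ?_)
        (not_le.2 (by rw [Ordinal.cof_toType]; exact lt_of_le_of_lt hHcard hcard2))
      by_contra hna
      exact hnb ⟨a, fun b hb => not_le.1 fun h => hna ⟨b, hb, h⟩⟩
    obtain ⟨b₁, hb₁⟩ := hHb
    obtain ⟨b₀, hb₀⟩ := mem_atTop_sets.1 (mem_map.1 (hf2 hV))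
    refine ⟨(max b₀ b₁, V), hV, ?_, hb₀ _ (le_max_left _ _), ?_⟩
    · intro δ hδ
      exact hVQ _ (mem_image_of_mem f ⟨⟨δ, hδ⟩, rfl⟩)
    · intro δ hδ
      exact lt_of_lt_of_le (hb₁ _ ⟨⟨δ, hδ⟩, rfl⟩) (le_max_right _ _)
  have wf : WellFounded ((· < ·) : μ.ToType → μ.ToType → Prop) := IsWellFounded.wf
  obtain ⟨F, hF⟩ : ∃ F : μ.ToType → μ.ToType × Set X,
      ∀ γ, F γ = Classical.choose (step γ (fun δ _ => (F δ).1)) :=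
    ⟨wf.fix (fun γ ih => Classical.choose (step γ (fun δ hδ => (ih δ hδ).1))),
      fun γ => wf.fix_eq _ γ⟩
  have spec : ∀ γ : μ.ToType, (F γ).2 ∈ nhds x ∧
      (∀ δ, δ < γ → f (F δ).1 ∉ (F γ).2) ∧
      f (F γ).1 ∈ (F γ).2 ∧ ∀ δ, δ < γ → (F δ).1 < (F γ).1 := by
    intro γ
    have h := Classical.choose_spec (step γ (fun δ _ => (F δ).1))
    rw [← hF γ] at h
    exact ⟨h.1, fun δ hδ => h.2.1 δ hδ, h.2.2.1, fun δ hδ => h.2.2.2 δ hδ⟩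
  have hβmono : StrictMono (fun γ => (F γ).1) := fun δ γ h => (spec γ).2.2.2 δ h
  set q : μ.ToType → X := fun γ => f (F γ).1 with hq
  set S : Set X := Set.range q ∪ NbhdCore x with hS
  set T : μ.ToType → Set X := fun γ => q '' Set.Ici γ ∪ NbhdCore x with hT
  have hqA : ∀ γ, q γ ∈ A := fun γ => hf1 _
  have hTS : ∀ γ, T γ ⊆ S := by
    intro γ
    exact union_subset_union (image_subset_range _ _) subset_rfl
  have hTanti : ∀ {a b : μ.ToType}, a ≤ b → T b ⊆ T a := by
    intro a b hab
    exact union_subset_union (image_mono (Set.Ici_subset_Ici.2 hab)) subset_rfl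
  have hTnhds : ∀ γ, T γ ∈ nhdsWithin x S := by
    intro γ
    rw [mem_nhdsWithin]
    obtain ⟨u, hu_sub, hu_open, hxu⟩ := mem_nhds_iff.1 (spec γ).1
    refine ⟨u, hu_open, hxu, ?_⟩
    rintro y ⟨hyu, hyS⟩
    rcases hyS with h | h
    · obtain ⟨δ, rfl⟩ := h
      by_cases hδ : δ < γ
      · exact absurd (hu_sub hyu) ((spec γ).2.1 δ hδ)
      · exact Or.inl ⟨δ, not_lt.1 hδ, rfl⟩
    · exact Or.inr h
  have hbase : ∀ U, U ⊆ S → U ∈ nhdsWithin x S → ∃ γ, T γ ⊆ U := by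
    intro U hUS hU
    obtain ⟨u, hu_open, hxu, huS⟩ := mem_nhdsWithin.1 hU
    have hu : u ∈ nhds x := hu_open.mem_nhds hxu
    obtain ⟨b₀, hb₀⟩ := mem_atTop_sets.1 (mem_map.1 (hf2 hu))
    refine ⟨b₀, ?_⟩
    rintro y (⟨δ, hδ, rfl⟩ | hy)
    · exact huS ⟨hb₀ _ (le_trans hδ hβmono.le_apply), Or.inl ⟨δ, rfl⟩⟩
    · exact huS ⟨nbhdCore_subset hu hy, Or.inr hy⟩
  refine ⟨S, fun y hy => Or.inr hy, Or.inr mem_nbhdCore, ⟨Set.range T, ?_, ?_, ?_, ?_⟩, ?_⟩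
  · rintro b ⟨γ, rfl⟩
    exact ⟨hTS γ, hTnhds γ⟩
  · intro U hUS hU
    obtain ⟨γ, hγ⟩ := hbase U hUS hU
    exact ⟨T γ, mem_range_self γ, hγ⟩
  · rintro _ ⟨γ, rfl⟩ _ ⟨γ', rfl⟩ _
    rcases le_total γ γ' with h | h
    · exact Or.inr (hTanti h)
    · exact Or.inl (hTanti h)
  · have hne : ∀ b : Set X, b ∈ Set.range T → {γ | T γ = b}.Nonempty := by
      rintro _ ⟨γ, rfl⟩; exact ⟨γ, rfl⟩
    set m : ↥(Set.range T) → μ.ToType := fun b => wf.min {γ | T γ = b} (hne b b.2) with hm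
    have hmT : ∀ b : ↥(Set.range T), T (m b) = b := fun b => wf.min_mem _ (hne b b.2)
    refine Subrelation.wf (r := InvImage (· < ·) m) ?_ (InvImage.wf m wf)
    intro a b hab
    rcases lt_or_ge (m a) (m b) with h | h
    · exact h
    · have hsub : (a : Set X) ⊆ (b : Set X) := by
        rw [← hmT a, ← hmT b]
        exact hTanti h
      exact absurd hsub hab.not_subset
  · intro U hUS hU
    obtain ⟨γ, hγ⟩ := hbase U hUS hU
    exact ⟨q γ, hγ (Or.inl ⟨γ, Set.self_mem_Ici, rfl⟩), hqA γ⟩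

lemma key (rad : RadialAt x) (A : Set X) (hA : x ∈ closure A) :
    ∃ S : Set X, NbhdCore x ⊆ S ∧ x ∈ S ∧ WellBasedWithin x S ∧
      ∀ U, U ⊆ S → U ∈ nhdsWithin x S → (U ∩ A).Nonempty := by
  by_cases hAN : ∀ y ∈ A, y ∉ NbhdCore x
  · exact spoke_of_closure rad hA hAN
  · push_neg at hAN
    obtain ⟨a, haA, haN⟩ := hAN
    refine ⟨NbhdCore x, subset_rfl, mem_nbhdCore, wellBasedWithin_nbhdCore, ?_⟩
    intro U _ hU
    exact ⟨a, nbhdCore_subset_of_mem_nhdsWithin hU haN, haA⟩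

end SpokeAux

/-- Theorem 4.1: `X` is radial at `x` if and only if `x` admits a spoke system. -/
theorem stmt_13 {X : Type u} [TopologicalSpace X] (x : X) :
    RadialAt x ↔ ∃ (I : Type u) (S : I → Set X), IsSpokeSystem x S := by
  constructor
  · intro rad
    refine ⟨{S : Set X // NbhdCore x ⊆ S ∧ x ∈ S ∧ WellBasedWithin x S}, fun i => i.1,
      ⟨⟨NbhdCore x, subset_rfl, mem_nbhdCore, wellBasedWithin_nbhdCore⟩⟩,
      fun i => i.2.1, fun i => i.2.2.1, fun i => i.2.2.2, ?_, ?_⟩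
    · intro U hU
      by_contra hW
      have hclos : x ∈ closure (⋃ i, U i)ᶜ := by
        rw [mem_closure_iff_nhds]
        intro t ht
        rcases eq_empty_or_nonempty (t ∩ (⋃ i, U i)ᶜ) with he | hne
        · refine absurd (Filter.mem_of_superset ht fun y hy => ?_) hW
          by_contra hyW
          exact (eq_empty_iff_forall_notMem.1 he y) ⟨hy, hyW⟩
        · exact hne
      obtain ⟨S₀, h1, h2, h3, h4⟩ := key rad _ hclos
      obtain ⟨y, hyU, hyW⟩ := h4 (U ⟨S₀, h1, h2, h3⟩) (hU ⟨S₀, h1, h2, h3⟩).1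
        (hU ⟨S₀, h1, h2, h3⟩).2
      exact hyW (mem_iUnion.2 ⟨⟨S₀, h1, h2, h3⟩, hyU⟩)
    · intro V hV
      refine ⟨fun i => i.1 ∩ V, fun i => ⟨inter_subset_left, inter_mem_nhdsWithin _ hV⟩, ?_⟩
      exact iUnion_subset fun i => inter_subset_right
  · rintro ⟨I, S, hne, hcore, hmem, hwb, hunion, -⟩
    intro A hA
    have hex : ∃ i, ∀ U, U ⊆ S i → U ∈ nhdsWithin x (S i) → (U ∩ A).Nonempty := by
      by_contra hc
      push_neg at hc
      choose U hU1 hU2 hU3 using hc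
      have hmemU := hunion U fun i => ⟨hU1 i, hU2 i⟩
      obtain ⟨y, hy1, hy2⟩ := mem_closure_iff_nhds.1 hA _ hmemU
      obtain ⟨i, hyi⟩ := mem_iUnion.1 hy1
      have : (U i ∩ A).Nonempty := ⟨y, hyi, hy2⟩
      rw [hU3 i] at this
      exact Set.not_nonempty_empty this
    obtain ⟨i, hi⟩ := hex
    obtain ⟨B, hB1, hB2, hB3, hB4⟩ := hwb i
    haveI hwo : IsWellOrder ↥B (fun a b => (b : Set X) ⊂ (a : Set X)) := by
      refine { trichotomous := ?_, wf := hB4 }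
      · intro a b h1 h2
        by_cases hab : a = b
        · exact hab
        · have hab' : (a : Set X) ≠ (b : Set X) := fun h => hab (Subtype.ext h)
          rcases hB3 a.2 b.2 hab' with h | h
          · exact absurd (ssubset_of_subset_of_ne h hab') h2
          · exact absurd (ssubset_of_subset_of_ne h hab'.symm) h1
    set o := Ordinal.type (fun a b : ↥B => (b : Set X) ⊂ (a : Set X)) with ho
    have hBne : Nonempty ↥B := by
      obtain ⟨b, hb, -⟩ := hB2 (S i) subset_rfl self_mem_nhdsWithin
      exact ⟨⟨b, hb⟩⟩
    have ho0 : o ≠ 0 := Ordinal.type_ne_zero_iff_nonempty.2 hBne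
    haveI : Nonempty o.ToType := Ordinal.nonempty_toType_iff.2 ho0
    haveI : IsWellOrder o.ToType (· < ·) := isWellOrder_lt
    have htt : Ordinal.type ((· < ·) : o.ToType → o.ToType → Prop) =
        Ordinal.type (fun a b : ↥B => (b : Set X) ⊂ (a : Set X)) :=
      Ordinal.type_toType o
    obtain ⟨e⟩ := Ordinal.type_eq.mp htt
    have hptex : ∀ b : ↥B, ((b : Set X) ∩ A).Nonempty :=
      fun b => hi _ (hB1 b b.2).1 (hB1 b b.2).2
    choose pt hpt using hptex
    refine ⟨o, ho0, fun γ => pt (e γ), fun γ => (hpt (e γ)).2, ?_⟩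
    intro V hV
    obtain ⟨b, hbB, hbV⟩ := hB2 (S i ∩ V) inter_subset_left (inter_mem_nhdsWithin _ hV)
    refine mem_atTop_sets.2 ⟨e.symm ⟨b, hbB⟩, fun γ hγ => ?_⟩
    have hsub : (e γ : Set X) ⊆ b := by
      rcases eq_or_lt_of_le hγ with h | h
      · rw [← h, e.apply_symm_apply]
      · have := e.map_rel_iff.2 h
        rw [e.apply_symm_apply] at this
        exact this.subset
    exact (hbV (hsub (hpt (e γ)).1)).2
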